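/- Let $n \ge 1$ and $b \ge 1$ be integers, let $\theta > 0$ be real, let $r_1, \ldots, r_b$ be nonnegative integers, and set $m = \sum_{j=1}^{b} j\, r_j$. Then $\sum_{\alpha} p_E(\alpha) \prod_{j=1}^{b} (\alpha_j)_{[r_j]} = \mathbf{1}\{m \le n\}\, \frac{n!\,\Gamma(\theta+n-m)}{(n-m)!\,\Gamma(\theta+n)}\, \prod_{j=1}^{b} \Big(\frac{\theta}{j}\Big)^{r_j}$, where the sum is over all tuples $(\alpha_1,\ldots,\alpha_n)$ of nonnegative integers with $\sum_{j=1}^{n} j\,\alpha_j = n$, and $(\alpha)_{[r]} = \alpha(\alpha-1)\cdots(\alpha-r+1)$ (equal to $0$ if $\alpha < r$). -/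

import Mathlib

open Finset

/-- All tuples `(α_1, …, α_n)` of nonnegative integers with `∑_j j α_j = n`
(here `α i` stands for `α_{i+1}`). -/
def esfTuples (n : ℕ) : Finset (Fin n → ℕ) :=
  (Fintype.piFinset fun _ : Fin n => Finset.range (n + 1)).filter
    (fun α => ∑ i : Fin n, ((i : ℕ) + 1) * α i = n)

/-- The Ewens Sampling Formula `p_E(α) = (n!/θ^{(n)}) ∏_{j=1}^n (θ/j)^{α_j}/α_j!`. -/
noncomputable def pE (θ : ℝ) {n : ℕ} (α : Fin n → ℕ) : ℝ :=
  (Nat.factorial n : ℝ) / (∏ i ∈ Finset.range n, (θ + i)) *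
    ∏ i : Fin n, (θ / ((i : ℕ) + 1)) ^ (α i) / (Nat.factorial (α i) : ℝ)

/-- `extendCounts n α j = α_j` for `1 ≤ j ≤ n`, and `0` otherwise. -/
def extendCounts (n : ℕ) (α : Fin n → ℕ) (j : ℕ) : ℕ :=
  if h : 1 ≤ j ∧ j ≤ n then α ⟨j - 1, by omega⟩ else 0


namespace ESFAux

def tup (M N : ℕ) : Finset (Fin M → ℕ) :=
  (Fintype.piFinset fun _ : Fin M => Finset.range (N + 1)).filter
    (fun α => ∑ i : Fin M, ((i : ℕ) + 1) * α i = N)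

lemma mem_tup {M N : ℕ} {α : Fin M → ℕ} :
    α ∈ tup M N ↔ ∑ i : Fin M, ((i : ℕ) + 1) * α i = N := by
  constructor
  · exact fun h => (Finset.mem_filter.mp h).2
  · intro h
    refine Finset.mem_filter.mpr ⟨Fintype.mem_piFinset.mpr fun i => ?_, h⟩
    rw [Finset.mem_range]
    have h1 : ((i : ℕ) + 1) * α i ≤ N :=
      h ▸ Finset.single_le_sum (f := fun k : Fin M => ((k : ℕ) + 1) * α k)
        (fun j _ => Nat.zero_le _) (Finset.mem_univ i)
    have h2 : α i ≤ ((i : ℕ) + 1) * α i := Nat.le_mul_of_pos_left _ (Nat.succ_pos _)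
    omega

noncomputable def S (θ : ℝ) (M N : ℕ) : ℝ :=
  ∑ α ∈ tup M N, ∏ i : Fin M, (θ / ((i : ℕ) + 1)) ^ (α i) / (Nat.factorial (α i) : ℝ)

lemma S_zero (θ : ℝ) (M : ℕ) : S θ M 0 = 1 := by
  have h : tup M 0 = {fun _ => 0} := by
    ext α
    simp only [mem_tup, Finset.mem_singleton]
    constructor
    · intro h
      funext i
      have h2 := Finset.sum_eq_zero_iff.mp h i (Finset.mem_univ i)
      rcases Nat.mul_eq_zero.mp h2 with h3 | h3 <;> omega
    · intro h; subst h; simp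
  simp [S, h]

end ESFAux

namespace ESFAux

lemma update_sum {M : ℕ} (α : Fin M → ℕ) (i : Fin M) (a : ℕ) :
    ∑ k : Fin M, ((k : ℕ) + 1) * (Function.update α i a) k
      = ((i : ℕ) + 1) * a + ∑ k ∈ Finset.univ \ {i}, ((k : ℕ) + 1) * α k := by
  rw [Finset.sum_eq_add_sum_sdiff_singleton_of_mem (Finset.mem_univ i)
    (fun k => ((k : ℕ) + 1) * (Function.update α i a) k)]
  simp only [Function.update_self]
  congr 1
  refine Finset.sum_congr rfl fun k hk => ?_
  rw [Function.update_of_ne (by simpa using (Finset.mem_sdiff.mp hk).2)]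

lemma head_step (x : ℝ) (a : ℕ) (ha : 1 ≤ a) :
    (a : ℝ) * (x ^ a / (Nat.factorial a : ℝ)) = x * (x ^ (a - 1) / (Nat.factorial (a - 1) : ℝ)) := by
  obtain ⟨c, rfl⟩ : ∃ c, a = c + 1 := ⟨a - 1, by omega⟩
  simp only [Nat.add_sub_cancel, pow_succ, Nat.factorial_succ, Nat.cast_mul]
  have h1 : (Nat.factorial c : ℝ) ≠ 0 := Nat.cast_ne_zero.mpr (Nat.factorial_ne_zero c)
  field_simp

lemma inner_sum (θ : ℝ) (M N : ℕ) (i : Fin M) :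
    ∑ α ∈ tup M N, (α i : ℝ) * ∏ k : Fin M, (θ / ((k : ℕ) + 1)) ^ (α k) / (Nat.factorial (α k) : ℝ)
      = if (i : ℕ) + 1 ≤ N then
          (θ / ((i : ℕ) + 1)) * S θ M (N - ((i : ℕ) + 1)) else 0 := by
  classical
  rw [← Finset.sum_filter_add_sum_filter_not (tup M N) (fun α => 1 ≤ α i)]
  have hz : ∑ α ∈ (tup M N).filter (fun α => ¬ 1 ≤ α i),
      (α i : ℝ) * ∏ k : Fin M, (θ / ((k : ℕ) + 1)) ^ (α k) / (Nat.factorial (α k) : ℝ) = 0 := by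
    refine Finset.sum_eq_zero fun α hα => ?_
    have : α i = 0 := by have := (Finset.mem_filter.mp hα).2; omega
    simp [this]
  rw [hz, add_zero]
  by_cases hN : (i : ℕ) + 1 ≤ N
  · rw [if_pos hN]
    rw [S, Finset.mul_sum]
    refine Finset.sum_nbij' (fun α => Function.update α i (α i - 1))
      (fun β => Function.update β i (β i + 1)) ?_ ?_ ?_ ?_ ?_
    · intro α hα
      obtain ⟨hα1, hα2⟩ := Finset.mem_filter.mp hα
      have hs := mem_tup.mp hα1
      rw [mem_tup, update_sum]
      rw [Finset.sum_eq_add_sum_sdiff_singleton_of_mem (Finset.mem_univ i)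
        (fun k => ((k : ℕ) + 1) * α k)] at hs
      have : ((i : ℕ) + 1) * (α i - 1) + ((i : ℕ) + 1) = ((i : ℕ) + 1) * α i := by
        obtain ⟨c, hc⟩ : ∃ c, α i = c + 1 := ⟨α i - 1, by omega⟩
        rw [hc]
        simp [Nat.add_sub_cancel, Nat.mul_succ]
      omega
    · intro β hβ
      have hs := mem_tup.mp hβ
      rw [Finset.sum_eq_add_sum_sdiff_singleton_of_mem (Finset.mem_univ i)
        (fun k => ((k : ℕ) + 1) * β k)] at hs
      refine Finset.mem_filter.mpr ⟨mem_tup.mpr ?_, by simp⟩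
      rw [update_sum]
      have : ((i : ℕ) + 1) * (β i + 1) = ((i : ℕ) + 1) * β i + ((i : ℕ) + 1) := by ring
      omega
    · intro α hα
      have hα2 := (Finset.mem_filter.mp hα).2
      funext k
      by_cases hk : k = i
      · subst hk; simp; omega
      · simp [Function.update_of_ne hk]
    · intro β hβ
      funext k
      by_cases hk : k = i
      · subst hk; simp
      · simp [Function.update_of_ne hk]
    · intro α hα
      have hα2 := (Finset.mem_filter.mp hα).2
      rw [Finset.prod_eq_mul_prod_sdiff_singleton_of_mem (Finset.mem_univ i)
        (fun k => (θ / ((k : ℕ) + 1)) ^ (α k) / (Nat.factorial (α k) : ℝ)),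
        Finset.prod_eq_mul_prod_sdiff_singleton_of_mem (Finset.mem_univ i)
        (fun k => (θ / ((k : ℕ) + 1)) ^ ((Function.update α i (α i - 1)) k) /
          (Nat.factorial ((Function.update α i (α i - 1)) k) : ℝ))]
      have htail : ∏ k ∈ Finset.univ \ {i},
          (θ / ((k : ℕ) + 1)) ^ ((Function.update α i (α i - 1)) k) /
            (Nat.factorial ((Function.update α i (α i - 1)) k) : ℝ)
          = ∏ k ∈ Finset.univ \ {i},
          (θ / ((k : ℕ) + 1)) ^ (α k) / (Nat.factorial (α k) : ℝ) := by
        refine Finset.prod_congr rfl fun k hk => ?_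
        rw [Function.update_of_ne (by simpa using (Finset.mem_sdiff.mp hk).2)]
      rw [htail, Function.update_self, ← mul_assoc, ← mul_assoc,
        head_step (θ / ((i : ℕ) + 1)) (α i) hα2]
  · rw [if_neg hN]
    refine Finset.sum_eq_zero fun α hα => ?_
    obtain ⟨hα1, hα2⟩ := Finset.mem_filter.mp hα
    have hs := mem_tup.mp hα1
    have h1 : ((i : ℕ) + 1) * α i ≤ N :=
      hs ▸ Finset.single_le_sum (f := fun k : Fin M => ((k : ℕ) + 1) * α k)
        (fun j _ => Nat.zero_le _) (Finset.mem_univ i)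
    have : ((i:ℕ)+1) ≤ ((i:ℕ)+1) * α i := Nat.le_mul_of_pos_right _ hα2
    omega

end ESFAux

namespace ESFAux

lemma S_rec (θ : ℝ) (M N : ℕ) (hN : 1 ≤ N) (hNM : N ≤ M) :
    (N : ℝ) * S θ M N = θ * ∑ k ∈ Finset.range N, S θ M k := by
  classical
  have step1 : (N : ℝ) * S θ M N
      = ∑ i : Fin M, ∑ α ∈ tup M N, (((i : ℕ) + 1) : ℝ) * ((α i : ℝ) *
          ∏ k : Fin M, (θ / ((k : ℕ) + 1)) ^ (α k) / (Nat.factorial (α k) : ℝ)) := by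
    rw [S, Finset.mul_sum, Finset.sum_comm]
    refine Finset.sum_congr rfl fun α hα => ?_
    have hs := mem_tup.mp hα
    have hcast : (N : ℝ) = ∑ x : Fin M, (((x : ℕ) + 1 : ℝ) * (α x : ℝ)) := by
      rw [← hs]; push_cast; rfl
    rw [hcast, Finset.sum_mul]
    exact Finset.sum_congr rfl fun x _ => by ring
  rw [step1]
  have step2 : ∀ i : Fin M,
      ∑ α ∈ tup M N, (((i : ℕ) + 1) : ℝ) * ((α i : ℝ) *
          ∏ k : Fin M, (θ / ((k : ℕ) + 1)) ^ (α k) / (Nat.factorial (α k) : ℝ))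
        = if (i : ℕ) + 1 ≤ N then θ * S θ M (N - ((i : ℕ) + 1)) else 0 := by
    intro i
    rw [← Finset.mul_sum, inner_sum]
    by_cases hi : (i : ℕ) + 1 ≤ N
    · rw [if_pos hi, if_pos hi, ← mul_assoc]
      congr 1
      have : (((i : ℕ) + 1) : ℝ) ≠ 0 := by positivity
      field_simp
    · rw [if_neg hi, if_neg hi, mul_zero]
  rw [Finset.sum_congr rfl fun i _ => step2 i]
  have step3 : ∑ i : Fin M, (if (i : ℕ) + 1 ≤ N then θ * S θ M (N - ((i : ℕ) + 1)) else 0)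
      = ∑ x ∈ Finset.range M, (if x + 1 ≤ N then θ * S θ M (N - (x + 1)) else 0) :=
    Fin.sum_univ_eq_sum_range (fun x => if x + 1 ≤ N then θ * S θ M (N - (x + 1)) else 0) M
  rw [step3]
  rw [← Finset.sum_subset (Finset.range_subset_range.mpr hNM)
    (fun x _ hx => if_neg (by rw [Finset.mem_range] at hx; omega))]
  have step4 : ∑ x ∈ Finset.range N, (if x + 1 ≤ N then θ * S θ M (N - (x + 1)) else 0)
      = ∑ x ∈ Finset.range N, θ * S θ M (N - 1 - x) := by
    refine Finset.sum_congr rfl fun x hx => ?_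
    rw [Finset.mem_range] at hx
    rw [if_pos (by omega)]
    congr 2
    omega
  rw [step4, Finset.sum_range_reflect (fun x => θ * S θ M x) N, ← Finset.mul_sum]

lemma sum_rising (θ : ℝ) (N : ℕ) :
    θ * ∑ k ∈ Finset.range N, (∏ i ∈ Finset.range k, (θ + i)) / (Nat.factorial k : ℝ)
      = (N : ℝ) * ((∏ i ∈ Finset.range N, (θ + i)) / (Nat.factorial N : ℝ)) := by
  induction N with
  | zero => simp
  | succ N ih =>
    rw [Finset.sum_range_succ, mul_add, ih, Finset.prod_range_succ, Nat.factorial_succ]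
    have h1 : (Nat.factorial N : ℝ) ≠ 0 := Nat.cast_ne_zero.mpr (Nat.factorial_ne_zero N)
    have h2 : ((N : ℝ) + 1) ≠ 0 := by positivity
    push_cast
    field_simp
    ring

lemma S_eq (θ : ℝ) (M : ℕ) : ∀ N, N ≤ M →
    S θ M N = (∏ i ∈ Finset.range N, (θ + i)) / (Nat.factorial N : ℝ) := by
  intro N
  induction N using Nat.strong_induction_on with
  | _ N ih =>
    intro hNM
    rcases Nat.eq_zero_or_pos N with h0 | h1
    · subst h0; simp [S_zero]
    · have hrec := S_rec θ M N h1 hNM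
      rw [Finset.sum_congr rfl (fun k hk => ih k (Finset.mem_range.mp hk)
        (le_trans (le_of_lt (Finset.mem_range.mp hk)) hNM)), sum_rising] at hrec
      have hN0 : (N : ℝ) ≠ 0 := Nat.cast_ne_zero.mpr (by omega)
      exact mul_left_cancel₀ hN0 hrec

end ESFAux

namespace ESFAux

lemma pointwise_split (x : ℝ) (a ρ : ℕ) (h : ρ ≤ a) :
    (x ^ a / (Nat.factorial a : ℝ)) * (Nat.descFactorial a ρ : ℝ)
      = x ^ ρ * (x ^ (a - ρ) / (Nat.factorial (a - ρ) : ℝ)) := by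
  have hfac : ((Nat.factorial (a - ρ) : ℝ)) * (Nat.descFactorial a ρ : ℝ)
      = (Nat.factorial a : ℝ) := by exact_mod_cast congrArg Nat.cast (Nat.factorial_mul_descFactorial h)
  have hpow : x ^ a = x ^ ρ * x ^ (a - ρ) := by rw [← pow_add]; congr 1; omega
  have h1 : (Nat.factorial a : ℝ) ≠ 0 := Nat.cast_ne_zero.mpr (Nat.factorial_ne_zero a)
  have h2 : (Nat.factorial (a - ρ) : ℝ) ≠ 0 := Nat.cast_ne_zero.mpr (Nat.factorial_ne_zero _)
  have h3 : (Nat.descFactorial a ρ : ℝ) ≠ 0 :=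
    Nat.cast_ne_zero.mpr fun h0 => absurd (Nat.descFactorial_eq_zero_iff_lt.mp h0) (not_lt.mpr h)
  rw [hpow, ← hfac]
  field_simp

lemma key (θ : ℝ) (n m : ℕ) (ρ : Fin n → ℕ)
    (hρ : ∑ i : Fin n, ((i : ℕ) + 1) * ρ i = m) (hmn : m ≤ n) :
    ∑ α ∈ tup n n, (∏ i : Fin n, (θ / ((i : ℕ) + 1)) ^ (α i) / (Nat.factorial (α i) : ℝ)) *
        ∏ i : Fin n, (Nat.descFactorial (α i) (ρ i) : ℝ)
      = (∏ i : Fin n, (θ / ((i : ℕ) + 1)) ^ (ρ i)) * S θ n (n - m) := by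
  classical
  rw [← Finset.sum_filter_add_sum_filter_not (tup n n) (fun α => ∀ i, ρ i ≤ α i)]
  have hz : ∑ α ∈ (tup n n).filter (fun α => ¬ ∀ i, ρ i ≤ α i),
      (∏ i : Fin n, (θ / ((i : ℕ) + 1)) ^ (α i) / (Nat.factorial (α i) : ℝ)) *
        ∏ i : Fin n, (Nat.descFactorial (α i) (ρ i) : ℝ) = 0 := by
    refine Finset.sum_eq_zero fun α hα => ?_
    have h2 := (Finset.mem_filter.mp hα).2
    push_neg at h2
    obtain ⟨i, hi⟩ := h2
    have hd : (∏ i : Fin n, (Nat.descFactorial (α i) (ρ i) : ℝ)) = 0 :=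
      Finset.prod_eq_zero (Finset.mem_univ i) (by rw [Nat.descFactorial_of_lt hi]; simp)
    rw [hd, mul_zero]
  rw [hz, add_zero, S, Finset.mul_sum]
  refine Finset.sum_nbij' (fun α i => α i - ρ i) (fun β i => β i + ρ i) ?_ ?_ ?_ ?_ ?_
  · intro α hα
    obtain ⟨hα1, hα2⟩ := Finset.mem_filter.mp hα
    have hs := mem_tup.mp hα1
    rw [mem_tup]
    have hsplit : ∀ i : Fin n, ((i : ℕ) + 1) * (α i - ρ i)
        = ((i : ℕ) + 1) * α i - ((i : ℕ) + 1) * ρ i := fun i => Nat.mul_sub ..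
    rw [Finset.sum_congr rfl fun i _ => hsplit i,
      Finset.sum_tsub_distrib _ (fun i _ => Nat.mul_le_mul_left _ (hα2 i)), hs, hρ]
  · intro β hβ
    have hs := mem_tup.mp hβ
    refine Finset.mem_filter.mpr ⟨mem_tup.mpr ?_, fun i => le_add_self⟩
    have hsplit : ∀ i : Fin n, ((i : ℕ) + 1) * (β i + ρ i)
        = ((i : ℕ) + 1) * β i + ((i : ℕ) + 1) * ρ i := fun i => by ring
    rw [Finset.sum_congr rfl fun i _ => hsplit i, Finset.sum_add_distrib, hs, hρ]
    omega
  · intro α hα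
    have hα2 := (Finset.mem_filter.mp hα).2
    funext i
    have := hα2 i
    simp only []
    omega
  · intro β _
    funext i
    simp only []
    omega
  · intro α hα
    have hα2 := (Finset.mem_filter.mp hα).2
    rw [← Finset.prod_mul_distrib, ← Finset.prod_mul_distrib]
    refine Finset.prod_congr rfl fun i _ => ?_
    exact pointwise_split (θ / ((i : ℕ) + 1)) (α i) (ρ i) (hα2 i)

end ESFAux

namespace ESFAux

@[to_additive]
lemma transfer_prod {M : Type*} [CommMonoid M] (b n : ℕ) (f : ℕ → M)
    (h1 : ∀ j, b < j → f j = 1) (h2 : ∀ j, n < j → f j = 1) :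
    ∏ j ∈ Finset.Icc 1 b, f j = ∏ j ∈ Finset.Icc 1 n, f j := by
  rw [Finset.prod_subset (Finset.Icc_subset_Icc_right (le_max_left b n))
    (fun j hj hj2 => h1 j (by
      simp only [Finset.mem_Icc] at hj hj2; omega)),
    Finset.prod_subset (Finset.Icc_subset_Icc_right (le_max_right b n))
    (fun j hj hj2 => h2 j (by
      simp only [Finset.mem_Icc] at hj hj2; omega))]

@[to_additive]
lemma fin_prod_eq_Icc {M : Type*} [CommMonoid M] (n : ℕ) (g : ℕ → M) :
    ∏ i : Fin n, g ((i : ℕ) + 1) = ∏ j ∈ Finset.Icc 1 n, g j := by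
  rw [Fin.prod_univ_eq_prod_range (fun k => g (k + 1)) n, ← Finset.Ico_add_one_right_eq_Icc,
    Finset.prod_Ico_eq_prod_range]
  simp [add_comm]

lemma ext_at {n : ℕ} (α : Fin n → ℕ) (i : Fin n) :
    extendCounts n α ((i : ℕ) + 1) = α i := by
  rw [extendCounts, dif_pos ⟨by omega, by omega⟩]
  congr 1

lemma ext_gt {n : ℕ} (α : Fin n → ℕ) {j : ℕ} (hj : n < j) :
    extendCounts n α j = 0 := by
  rw [extendCounts, dif_neg (by omega)]

lemma Gamma_prod (θ : ℝ) (hθ : 0 < θ) (k : ℕ) :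
    Real.Gamma (θ + k) = (∏ i ∈ Finset.range k, (θ + i)) * Real.Gamma θ := by
  induction k with
  | zero => simp
  | succ k ih =>
    have h : θ + ((k : ℕ) + 1 : ℕ) = (θ + k) + 1 := by push_cast; ring
    rw [h, Real.Gamma_add_one (by positivity), ih, Finset.prod_range_succ]
    ring

end ESFAux


/-- Joint falling factorial moments of the Ewens Sampling Formula (Watterson):
`E ∏_{j=1}^b (α_j)_{[r_j]}
  = 1{m ≤ n} (n! Γ(θ+n-m))/((n-m)! Γ(θ+n)) ∏_{j=1}^b (θ/j)^{r_j}` with `m = ∑ j r_j`. -/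
theorem stmt_14 (n : ℕ) (hn : 1 ≤ n) (b : ℕ) (hb : 1 ≤ b) (θ : ℝ) (hθ : 0 < θ)
    (r : ℕ → ℕ) (m : ℕ) (hm : m = ∑ j ∈ Finset.Icc 1 b, j * r j) :
    ∑ α ∈ esfTuples n,
        pE θ α * ∏ j ∈ Finset.Icc 1 b, (Nat.descFactorial (extendCounts n α j) (r j) : ℝ)
      = (if m ≤ n then
            (Nat.factorial n : ℝ) * Real.Gamma (θ + n - m) /
              ((Nat.factorial (n - m) : ℝ) * Real.Gamma (θ + n))
          else 0) *
        ∏ j ∈ Finset.Icc 1 b, (θ / j) ^ (r j) := by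
  classical
  have htup : esfTuples n = ESFAux.tup n n := rfl
  -- value of the constrained sum for any α in esfTuples n
  have hsum_ext : ∀ α ∈ esfTuples n,
      ∑ j ∈ Finset.Icc 1 n, j * extendCounts n α j = n := by
    intro α hα
    rw [← ESFAux.fin_sum_eq_Icc n (fun j => j * extendCounts n α j)]
    have : ∀ i : Fin n, ((i : ℕ) + 1) * extendCounts n α ((i : ℕ) + 1)
        = ((i : ℕ) + 1) * α i := fun i => by rw [ESFAux.ext_at]
    rw [Finset.sum_congr rfl fun i _ => this i]
    exact (Finset.mem_filter.mp hα).2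
  by_cases hmn : m ≤ n
  · rw [if_pos hmn]
    have hF1 : ∀ j, n < j → j ≤ b → r j = 0 := by
      intro j hj hjb
      by_contra hr
      have h1 : j * r j ≤ m := hm ▸ Finset.single_le_sum (f := fun j => j * r j)
        (fun k _ => Nat.zero_le _) (Finset.mem_Icc.mpr ⟨by omega, hjb⟩)
      have h2 : j ≤ j * r j := Nat.le_mul_of_pos_right _ (by omega)
      omega
    set R : ℕ → ℕ := fun j => if j ≤ b then r j else 0 with hR
    set ρ : Fin n → ℕ := fun i => R ((i : ℕ) + 1) with hρdef
    have hC1 : ∑ i : Fin n, ((i : ℕ) + 1) * ρ i = m := by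
      rw [hρdef]
      rw [ESFAux.fin_sum_eq_Icc n (fun j => j * R j), hm]
      refine (ESFAux.transfer_sum b n (fun j => j * R j) ?_ ?_).symm.trans ?_
      · intro j hj; rw [hR]; simp only; rw [if_neg (by omega), mul_zero]
      · intro j hj
        by_cases hjb : j ≤ b
        · rw [hR]; simp only; rw [if_pos hjb, hF1 j hj hjb, mul_zero]
        · rw [hR]; simp only; rw [if_neg hjb, mul_zero]
      · refine Finset.sum_congr rfl fun j hj => ?_
        rw [hR]; simp only; rw [if_pos (Finset.mem_Icc.mp hj).2]
    have hprodθ : ∏ j ∈ Finset.Icc 1 b, (θ / j) ^ (r j)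
        = ∏ i : Fin n, (θ / ((i : ℕ) + 1)) ^ (ρ i) := by
      have e1 : ∏ j ∈ Finset.Icc 1 b, (θ / j) ^ (r j)
          = ∏ j ∈ Finset.Icc 1 b, (θ / (j : ℕ)) ^ (R j) := by
        refine Finset.prod_congr rfl fun j hj => ?_
        rw [hR]; simp only; rw [if_pos (Finset.mem_Icc.mp hj).2]
      rw [e1, ESFAux.transfer_prod b n (fun j => (θ / (j : ℕ)) ^ (R j))
        (fun j hj => by rw [hR]; simp only; rw [if_neg (by omega), pow_zero])
        (fun j hj => by
          by_cases hjb : j ≤ b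
          · rw [hR]; simp only; rw [if_pos hjb, hF1 j hj hjb, pow_zero]
          · rw [hR]; simp only; rw [if_neg hjb, pow_zero]),
        ← ESFAux.fin_prod_eq_Icc n (fun j => (θ / (j : ℕ)) ^ (R j))]
      refine Finset.prod_congr rfl fun i _ => ?_
      rw [hρdef]
      push_cast
      ring_nf
    have hdesc : ∀ α : Fin n → ℕ,
        ∏ j ∈ Finset.Icc 1 b, (Nat.descFactorial (extendCounts n α j) (r j) : ℝ)
          = ∏ i : Fin n, (Nat.descFactorial (α i) (ρ i) : ℝ) := by
      intro α
      have e1 : ∏ j ∈ Finset.Icc 1 b, (Nat.descFactorial (extendCounts n α j) (r j) : ℝ)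
          = ∏ j ∈ Finset.Icc 1 b, (Nat.descFactorial (extendCounts n α j) (R j) : ℝ) := by
        refine Finset.prod_congr rfl fun j hj => ?_
        rw [hR]; simp only; rw [if_pos (Finset.mem_Icc.mp hj).2]
      rw [e1, ESFAux.transfer_prod b n
        (fun j => (Nat.descFactorial (extendCounts n α j) (R j) : ℝ))
        (fun j hj => by rw [hR]; simp only; rw [if_neg (by omega)]; simp)
        (fun j hj => by
          by_cases hjb : j ≤ b
          · rw [hR]; simp only; rw [if_pos hjb, hF1 j hj hjb]; simp
          · rw [hR]; simp only; rw [if_neg hjb]; simp),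
        ← ESFAux.fin_prod_eq_Icc n
          (fun j => (Nat.descFactorial (extendCounts n α j) (R j) : ℝ))]
      refine Finset.prod_congr rfl fun i _ => ?_
      rw [ESFAux.ext_at, hρdef]
    have key := ESFAux.key θ n m ρ hC1 hmn
    have hLHS : ∑ α ∈ esfTuples n,
        pE θ α * ∏ j ∈ Finset.Icc 1 b, (Nat.descFactorial (extendCounts n α j) (r j) : ℝ)
        = (Nat.factorial n : ℝ) / (∏ i ∈ Finset.range n, (θ + i)) *
            ((∏ j ∈ Finset.Icc 1 b, (θ / j) ^ (r j)) *
              ((∏ i ∈ Finset.range (n - m), (θ + i)) / (Nat.factorial (n - m) : ℝ))) := by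
      have e1 : ∀ α ∈ esfTuples n,
          pE θ α * ∏ j ∈ Finset.Icc 1 b, (Nat.descFactorial (extendCounts n α j) (r j) : ℝ)
          = (Nat.factorial n : ℝ) / (∏ i ∈ Finset.range n, (θ + i)) *
            ((∏ i : Fin n, (θ / ((i : ℕ) + 1)) ^ (α i) / (Nat.factorial (α i) : ℝ)) *
              ∏ i : Fin n, (Nat.descFactorial (α i) (ρ i) : ℝ)) := by
        intro α _
        rw [pE, hdesc α]
        ring
      rw [Finset.sum_congr rfl e1, ← Finset.mul_sum, htup, key,
        ESFAux.S_eq θ n (n - m) (by omega), hprodθ]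
    rw [hLHS]
    have hGn : Real.Gamma (θ + n) = (∏ i ∈ Finset.range n, (θ + i)) * Real.Gamma θ :=
      ESFAux.Gamma_prod θ hθ n
    have hcast : θ + (n : ℝ) - (m : ℝ) = θ + ((n - m : ℕ) : ℝ) := by
      push_cast [hmn]
      ring
    have hGnm : Real.Gamma (θ + n - m)
        = (∏ i ∈ Finset.range (n - m), (θ + i)) * Real.Gamma θ := by
      rw [hcast]
      exact ESFAux.Gamma_prod θ hθ (n - m)
    have hPn : (0 : ℝ) < ∏ i ∈ Finset.range n, (θ + i) :=
      Finset.prod_pos fun i _ => by positivity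
    have hPnm : (0 : ℝ) < ∏ i ∈ Finset.range (n - m), (θ + i) :=
      Finset.prod_pos fun i _ => by positivity
    have hΓ : Real.Gamma θ ≠ 0 := (Real.Gamma_pos_of_pos hθ).ne'
    have h1 : (Nat.factorial (n - m) : ℝ) ≠ 0 := Nat.cast_ne_zero.mpr (Nat.factorial_ne_zero _)
    have hcoef : (Nat.factorial n : ℝ) *
          ((∏ i ∈ Finset.range (n - m), (θ + i)) * Real.Gamma θ) /
          ((Nat.factorial (n - m) : ℝ) * ((∏ i ∈ Finset.range n, (θ + i)) * Real.Gamma θ))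
        = (Nat.factorial n : ℝ) / (∏ i ∈ Finset.range n, (θ + i)) *
            ((∏ i ∈ Finset.range (n - m), (θ + i)) / (Nat.factorial (n - m) : ℝ)) := by
      field_simp
    rw [hGn, hGnm, hcoef]
    ring
  · rw [if_neg hmn, zero_mul]
    refine Finset.sum_eq_zero fun α hα => ?_
    have hex : ∃ j ∈ Finset.Icc 1 b, extendCounts n α j < r j := by
      by_contra hno
      push_neg at hno
      have hle : ∑ j ∈ Finset.Icc 1 b, j * r j
          ≤ ∑ j ∈ Finset.Icc 1 b, j * extendCounts n α j :=
        Finset.sum_le_sum fun j hj => Nat.mul_le_mul_left _ (hno j hj)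
      have hle2 : ∑ j ∈ Finset.Icc 1 b, j * extendCounts n α j
          ≤ ∑ j ∈ Finset.Icc 1 n, j * extendCounts n α j := by
        calc ∑ j ∈ Finset.Icc 1 b, j * extendCounts n α j
            ≤ ∑ j ∈ Finset.Icc 1 (max b n), j * extendCounts n α j :=
              Finset.sum_le_sum_of_subset (Finset.Icc_subset_Icc_right (le_max_left b n))
          _ = ∑ j ∈ Finset.Icc 1 n, j * extendCounts n α j := by
              refine (Finset.sum_subset (Finset.Icc_subset_Icc_right (le_max_right b n))
                (fun j hj hj2 => ?_)).symm
              rw [ESFAux.ext_gt α (j := j) (by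
                simp only [Finset.mem_Icc] at hj hj2; omega), mul_zero]
      have h3 := hsum_ext α hα
      omega
    obtain ⟨j, hj, hlt⟩ := hex
    have hd : ∏ j ∈ Finset.Icc 1 b, (Nat.descFactorial (extendCounts n α j) (r j) : ℝ) = 0 :=
      Finset.prod_eq_zero hj (by rw [Nat.descFactorial_of_lt hlt]; simp)
    rw [hd, mul_zero]
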